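/- Let F be a loop and A an abelian group. Two normalized cocycles θ, μ ∈ C(F,A) lie in the same Aut*(F,A)-orbit if and only if there exists a loop isomorphism f : X(F,A,θ) → X(F,A,μ) with f({1}×A) = {1}×A. Consequently, the orbits of Aut*(F,A) on C(F,A) are in bijection with isomorphism classes of pairs (L,A) where A ≤ Z(L) and L/A ≅ F. -/
import Mathlib


universe u v

/-- A loop: a set with binary operation, two-sided identity, and bijective translations. -/
class Loop (Q : Type u) extends Mul Q, One Q where
  one_mul : ∀ x : Q, 1 * x = x
  mul_one : ∀ x : Q, x * 1 = x
  mulLeft_bij : ∀ x : Q, Function.Bijective (fun y : Q => x * y)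
  mulRight_bij : ∀ x : Q, Function.Bijective (fun y : Q => y * x)

/-- `z` commutes and associates (in all three positions) with all elements,
with respect to the binary operation `mul`. -/
def IsCentral {Q : Type u} (mul : Q → Q → Q) (z : Q) : Prop :=
  (∀ x, mul z x = mul x z) ∧
  (∀ x y, mul z (mul x y) = mul (mul z x) y) ∧
  (∀ x y, mul x (mul z y) = mul (mul x z) y) ∧
  (∀ x y, mul x (mul y z) = mul (mul x y) z)

/-- Normalized cocycle: θ(1,x) = θ(x,1) = 0. -/
def IsCocycle {F : Type u} {A : Type v} [One F] [AddCommGroup A]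
    (θ : F → F → A) : Prop :=
  ∀ x : F, θ 1 x = 0 ∧ θ x 1 = 0

/-- Multiplication of the central extension X(F,A,θ) on F × A. -/
def cmul {F : Type u} {A : Type v} [Mul F] [AddCommGroup A]
    (θ : F → F → A) (p q : F × A) : F × A :=
  (p.1 * q.1, p.2 + q.2 + θ p.1 q.1)

/-- Left-normed powers: `lpow mul z n` is z^(n+1). -/
def lpow {Q : Type u} (mul : Q → Q → Q) (z : Q) : ℕ → Q
  | 0 => z
  | n + 1 => mul (lpow mul z n) z

/-- Coboundary of τ. -/
def coboundary {F : Type u} {A : Type v} [Mul F] [AddCommGroup A]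
    (τ : F → A) : F → F → A :=
  fun x y => τ (x * y) - τ x - τ y

/-- The affine automorphism group Aut*(F,A): triples (α,β,τ). -/
structure AutStar (F : Type u) (A : Type v) [Mul F] [One F] [AddCommGroup A] where
  α : F ≃ F
  mapMul : ∀ x y : F, α (x * y) = α x * α y
  mapOne : α 1 = 1
  β : A ≃+ A
  τ : F → A
  τone : τ 1 = 0

namespace AutStar

variable {F : Type u} {A : Type v} [Mul F] [One F] [AddCommGroup A]

/-- Multiplication (α,β,τ)(α',β',τ') = (αα', ββ', ατ' + τβ'). -/
def mul (g h : AutStar F A) : AutStar F A where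
  α := g.α.trans h.α
  mapMul := fun x y => by
    simp only [Equiv.trans_apply, g.mapMul, h.mapMul]
  mapOne := by simp only [Equiv.trans_apply, g.mapOne, h.mapOne]
  β := g.β.trans h.β
  τ := fun x => h.τ (g.α x) + h.β (g.τ x)
  τone := by simp only [g.mapOne, h.τone, g.τone, map_zero, add_zero]

/-- The identity element of Aut*(F,A). -/
def one (F : Type u) (A : Type v) [Mul F] [One F] [AddCommGroup A] : AutStar F A where
  α := Equiv.refl F
  mapMul := fun _ _ => rfl
  mapOne := rfl
  β := AddEquiv.refl A
  τ := fun _ => 0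
  τone := rfl

end AutStar

/-- The affine action of (α,β,τ) on F × A. -/
def actP {F : Type u} {A : Type v} [Mul F] [One F] [AddCommGroup A]
    (p : F × A) (g : AutStar F A) : F × A :=
  (g.α p.1, g.β p.2 + g.τ p.1)

/-- The affine action of (α,β,τ) on cocycles. -/
def actC {F : Type u} {A : Type v} [Mul F] [One F] [AddCommGroup A]
    (θ : F → F → A) (g : AutStar F A) : F → F → A :=
  fun x y =>
    g.β (θ (g.α.symm x) (g.α.symm y)) + g.τ (g.α.symm (x * y))
      - g.τ (g.α.symm x) - g.τ (g.α.symm y)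

/-- θ, μ lie in the same Aut*(F,A)-orbit. -/
def InSameOrbit {F : Type u} {A : Type v} [Mul F] [One F] [AddCommGroup A]
    (θ μ : F → F → A) : Prop :=
  ∃ g : AutStar F A, actC θ g = μ

/-- The extensions X(F,A,θ) and X(F,A,μ) are isomorphic as central extensions,
i.e. via a loop isomorphism mapping {1}×A onto itself. -/
def ExtIso {F : Type u} {A : Type v} [Mul F] [One F] [AddCommGroup A]
    (θ μ : F → F → A) : Prop :=
  ∃ f : (F × A) ≃ (F × A),
    (∀ p q : F × A, f (cmul θ p q) = cmul μ (f p) (f q)) ∧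
    (f '' {p : F × A | p.1 = 1} = {p : F × A | p.1 = 1})

/-- Two normalized cocycles lie in the same Aut*(F,A)-orbit iff the corresponding
central extensions are isomorphic via an isomorphism carrying {1}×A onto itself;
consequently, the orbits of Aut*(F,A) on C(F,A) are in bijection with the
isomorphism classes of central extensions of F by A. -/

theorem orbit_iff_extIso {F : Type u} {A : Type v} [Loop F] [AddCommGroup A]
    (θ μ : F → F → A) (hθ : IsCocycle θ) (hμ : IsCocycle μ) :
    InSameOrbit θ μ ↔ ExtIso θ μ := by
  constructor
  · rintro ⟨g, hg⟩
    refine ⟨⟨fun p => (g.α p.1, g.β p.2 + g.τ p.1),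
      fun p => (g.α.symm p.1, g.β.symm (p.2 - g.τ (g.α.symm p.1))), ?_, ?_⟩, ?_, ?_⟩
    · intro p; simp
    · intro p; simp
    · intro p q
      have hμ' : μ (g.α p.1) (g.α q.1)
          = g.β (θ p.1 q.1) + g.τ (p.1 * q.1) - g.τ p.1 - g.τ q.1 := by
        rw [← hg]
        have h1 : g.α.symm (g.α p.1 * g.α q.1) = p.1 * q.1 := by
          rw [← g.mapMul, Equiv.symm_apply_apply]
        simp [actC, h1]
      simp only [cmul, Equiv.coe_fn_mk]
      refine Prod.ext ?_ ?_
      · exact g.mapMul _ _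
      · simp only [hμ', map_add]
        abel
    · ext p
      simp only [Set.mem_image, Set.mem_setOf_eq]
      constructor
      · rintro ⟨q, hq, rfl⟩
        simp only [Equiv.coe_fn_mk, hq, g.mapOne]
      · intro hp
        obtain ⟨x, a⟩ := p
        simp only at hp
        subst hp
        exact ⟨(1, g.β.symm a), rfl, by
          simp [Equiv.coe_fn_mk, g.mapOne, g.τone]⟩
  · rintro ⟨f, hf, hset⟩
    set a0 : F → F := fun x => (f (x, 0)).1 with ha0
    set t0 : F → A := fun x => (f (x, 0)).2 with ht0
    set b0 : A → A := fun a => (f (1, a)).2 with hb0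
    have hone1 : ∀ a : A, (f (1, a)).1 = 1 := by
      intro a
      have hm : f (1, a) ∈ f '' {p : F × A | p.1 = 1} := ⟨(1, a), rfl, rfl⟩
      rw [hset] at hm
      exact hm
    have hfx : ∀ x : F, f (x, (0:A)) = (a0 x, t0 x) := fun x => rfl
    have hf1 : ∀ a : A, f ((1:F), a) = (1, b0 a) := fun a => Prod.ext (hone1 a) rfl
    have hdec : ∀ (x : F) (a : A), f (x, a) = (a0 x, b0 a + t0 x) := by
      intro x a
      have h1 : cmul θ (x, (0:A)) (1, a) = (x, a) := by
        simp [cmul, (hθ x).2, Loop.mul_one]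
      have h2 := hf (x, 0) (1, a)
      rw [h1, hfx, hf1] at h2
      rw [h2]
      simp only [cmul, Loop.mul_one, (hμ (a0 x)).2, add_zero]
      exact Prod.ext rfl (by abel)
    have badd : ∀ a b : A, b0 (a + b) = b0 a + b0 b := by
      intro a b
      have h1 : cmul θ ((1:F), a) (1, b) = (1, a + b) := by
        simp [cmul, (hθ 1).1, Loop.mul_one]
      have h2 := hf (1, a) (1, b)
      rw [h1, hf1, hf1, hf1] at h2
      have h3 := congrArg Prod.snd h2
      simp only [cmul, (hμ 1).1, add_zero] at h3
      exact h3
    have b0zero : b0 0 = 0 := by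
      have := badd 0 0
      rw [add_zero] at this
      exact add_eq_left.mp this.symm
    have a0one : a0 1 = 1 := hone1 0
    have t0one : t0 1 = 0 := b0zero
    have binj : Function.Injective b0 := by
      intro a b hab
      have : f ((1:F), a) = f (1, b) := by rw [hf1, hf1, hab]
      exact (Prod.ext_iff.mp (f.injective this)).2
    have bsurj : Function.Surjective b0 := by
      intro c
      have hm : ((1:F), c) ∈ f '' {p : F × A | p.1 = 1} := by
        rw [hset]; exact rfl
      obtain ⟨q, hq, hfq⟩ := hm
      refine ⟨q.2, ?_⟩
      have hq1 : q = (1, q.2) := Prod.ext hq rfl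
      rw [hq1, hf1] at hfq
      exact (Prod.ext_iff.mp hfq).2
    have hkey : ∀ x y : F, (a0 (x * y) = a0 x * a0 y) ∧
        (μ (a0 x) (a0 y) = b0 (θ x y) + t0 (x * y) - t0 x - t0 y) := by
      intro x y
      have h1 : cmul θ (x, (0:A)) (y, 0) = (x * y, θ x y) := by
        simp [cmul]
      have h2 := hf (x, 0) (y, 0)
      rw [h1, hdec (x * y) (θ x y), hfx, hfx] at h2
      simp only [cmul, Prod.mk.injEq] at h2
      refine ⟨h2.1, ?_⟩
      rw [h2.2]
      abel
    have hmul : ∀ x y : F, a0 (x * y) = a0 x * a0 y := fun x y => (hkey x y).1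
    have hcoc : ∀ x y : F, μ (a0 x) (a0 y) = b0 (θ x y) + t0 (x * y) - t0 x - t0 y :=
      fun x y => (hkey x y).2
    have ainj : Function.Injective a0 := by
      intro x y hxy
      obtain ⟨a, ha⟩ := bsurj (t0 y - t0 x)
      have hfe : f (x, a) = f (y, 0) := by
        rw [hdec, hdec, hxy, ha, b0zero, zero_add]
        refine Prod.ext rfl ?_
        exact sub_add_cancel _ _
      exact (Prod.ext_iff.mp (f.injective hfe)).1
    have asurj : Function.Surjective a0 := by
      intro z
      refine ⟨(f.symm (z, 0)).1, ?_⟩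
      have h1 : f ((f.symm (z, 0)).1, (f.symm (z, 0)).2) = (z, 0) := by
        rw [Prod.mk.eta, Equiv.apply_symm_apply]
      rw [hdec] at h1
      exact (Prod.ext_iff.mp h1).1
    refine ⟨{ α := Equiv.ofBijective a0 ⟨ainj, asurj⟩
              mapMul := hmul
              mapOne := a0one
              β := ⟨Equiv.ofBijective b0 ⟨binj, bsurj⟩, badd⟩
              τ := t0
              τone := t0one }, ?_⟩
    funext u v
    set αe : F ≃ F := Equiv.ofBijective a0 ⟨ainj, asurj⟩ with hαe
    have hap : ∀ x : F, αe x = a0 x := fun _ => rfl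
    have hu : a0 (αe.symm u) = u := αe.apply_symm_apply u
    have hv : a0 (αe.symm v) = v := αe.apply_symm_apply v
    have hxy : αe.symm (u * v) = αe.symm u * αe.symm v := by
      apply αe.injective
      rw [Equiv.apply_symm_apply]
      show u * v = a0 (αe.symm u * αe.symm v)
      rw [hmul, hu, hv]
    show b0 (θ (αe.symm u) (αe.symm v)) + t0 (αe.symm (u * v))
        - t0 (αe.symm u) - t0 (αe.symm v) = μ u v
    rw [hxy, ← hcoc, hu, hv]

theorem stmt10 {F : Type u} {A : Type v} [Loop F] [AddCommGroup A] :
    (∀ θ μ : F → F → A, IsCocycle θ → IsCocycle μ →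
      (InSameOrbit θ μ ↔ ExtIso θ μ)) ∧
    Nonempty
      ((Quot fun θ μ : {θ : F → F → A // IsCocycle θ} => InSameOrbit θ.1 μ.1) ≃
       (Quot fun θ μ : {θ : F → F → A // IsCocycle θ} => ExtIso θ.1 μ.1)) := by
  refine ⟨fun θ μ hθ hμ => orbit_iff_extIso θ μ hθ hμ, ⟨?_⟩⟩
  exact {
    toFun := Quot.map id (fun a b h => (orbit_iff_extIso a.1 b.1 a.2 b.2).mp h)
    invFun := Quot.map id (fun a b h => (orbit_iff_extIso a.1 b.1 a.2 b.2).mpr h)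
    left_inv := fun q => by induction q using Quot.ind; rfl
    right_inv := fun q => by induction q using Quot.ind; rfl }
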